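/- arXiv:1308.4527 — 4 statements merged into one kernel-verified Lean document; each statement's English description precedes it below -/
import Mathlib

section
/- Let f : ℝ → ℝ be a nonnegative integrable function (a probability density) such that ∫ x²·f(x) dx < ∞. Then for every α > 0, the series ∑_{k∈ℤ} √(∫_{[kα,(k+1)α]} f(x) dx) converges. -/
open MeasureTheory Set

private lemma sqrt_amgm (a b : ℝ) (ha : 0 ≤ a) (hb : 0 ≤ b) :
    Real.sqrt (a * b) ≤ a + b := by
  rw [Real.sqrt_mul ha]
  nlinarith [Real.sq_sqrt ha, Real.sq_sqrt hb, sq_nonneg (Real.sqrt a - Real.sqrt b),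
    Real.sqrt_nonneg a, Real.sqrt_nonneg b]

private lemma summable_inv_one_add_sq : Summable fun k : ℤ => 1 / (1 + (k : ℝ) ^ 2) := by
  have hnat : Summable fun n : ℕ => 1 / (1 + (n : ℝ) ^ 2) := by
    have h1 : Summable fun n : ℕ => (2:ℝ) / ((n:ℝ) + 1) ^ 2 := by
      have := (summable_nat_add_iff (f := fun n : ℕ => 1 / (n : ℝ) ^ 2) 1).mpr
        (Real.summable_one_div_nat_pow.mpr one_lt_two)
      exact (this.mul_left 2).congr (by intro n; push_cast; ring)
    refine Summable.of_nonneg_of_le (fun n => by positivity) (fun n => ?_) h1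
    rw [div_le_div_iff₀ (by positivity) (by positivity)]
    nlinarith [sq_nonneg ((n:ℝ) - 1)]
  refine Summable.of_nat_of_neg hnat ?_
  exact hnat.congr (by intro n; push_cast; ring_nf)

private lemma poly_bound {α : ℝ} (hα : 0 < α) (k : ℤ) (x : ℝ)
    (hx : x ∈ Set.Icc ((k : ℝ) * α) (((k : ℝ) + 1) * α)) :
    1 + (k : ℝ) ^ 2 ≤ (3 + 2 / α ^ 2) * (1 + x ^ 2) := by
  obtain ⟨h1, h2⟩ := hx
  have hα2 : (0:ℝ) < α ^ 2 := by positivity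
  rw [show (3 + 2 / α ^ 2) = (3 * α ^ 2 + 2) / α ^ 2 by field_simp]
  rw [div_mul_eq_mul_div, le_div_iff₀ hα2]
  rcases le_or_gt 0 (k : ℝ) with hk | hk
  · have hx0 : (0:ℝ) ≤ (k:ℝ) * α := mul_nonneg hk hα.le
    have := mul_self_le_mul_self hx0 h1
    nlinarith [sq_nonneg x, sq_nonneg α]
  · have hk1 : (k : ℝ) + 1 ≤ 0 := by
      have : k + 1 ≤ 0 := by
        have : k < 0 := by exact_mod_cast hk
        omega
      exact_mod_cast this
    have hx0 : x ≤ 0 := h2.trans (mul_nonpos_of_nonpos_of_nonneg hk1 hα.le)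
    have hneg : (0:ℝ) ≤ -(((k:ℝ) + 1) * α) := by nlinarith
    have := mul_self_le_mul_self hneg (by linarith : -(((k:ℝ)+1)*α) ≤ -x)
    nlinarith [sq_nonneg ((k:ℝ) + 2), sq_nonneg α, sq_nonneg x]

/-- A probability density with finite second moment has summable interval square-root masses
for every spacing `α > 0`. -/
theorem stmt_1 (f : ℝ → ℝ) (hmeas : Measurable f) (hnn : ∀ x, 0 ≤ f x)
    (hint : MeasureTheory.Integrable f) (hprob : (∫ x, f x) = 1)
    (hmom : MeasureTheory.Integrable fun x => x ^ 2 * f x) (α : ℝ) (hα : 0 < α) :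
    Summable fun k : ℤ =>
      Real.sqrt (∫ x in Set.Icc ((k : ℝ) * α) (((k : ℝ) + 1) * α), f x) := by
  set C : ℝ := 3 + 2 / α ^ 2 with hC
  have hC0 : 0 < C := by positivity
  -- the dominating function
  set h : ℝ → ℝ := fun x => C * ((1 + x ^ 2) * f x) with hh
  have hh_int : Integrable h := by
    have : Integrable fun x => (1 + x ^ 2) * f x := by
      have := hint.add hmom
      exact this.congr (by filter_upwards with x; simp [Pi.add_apply]; ring)
    exact this.const_mul C
  have hh_nn : ∀ x, 0 ≤ h x := fun x => by
    have := hnn x; positivity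
  set I : ℤ → Set ℝ := fun k => Set.Icc ((k : ℝ) * α) (((k : ℝ) + 1) * α) with hI
  set ω : ℤ → ℝ := fun k => ∫ x in I k, f x with hω
  have hω_nn : ∀ k, 0 ≤ ω k := fun k =>
    setIntegral_nonneg measurableSet_Icc fun x _ => hnn x
  set b : ℤ → ℝ := fun k => ∫ x in I k, h x with hb
  have hb_nn : ∀ k, 0 ≤ b k := fun k =>
    setIntegral_nonneg measurableSet_Icc fun x _ => hh_nn x
  -- the key comparison: (1+k²) ω k ≤ b k
  have hkey : ∀ k : ℤ, (1 + (k : ℝ) ^ 2) * ω k ≤ b k := by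
    intro k
    have : (1 + (k : ℝ) ^ 2) * ω k = ∫ x in I k, (1 + (k : ℝ) ^ 2) * f x := by
      rw [hω, ← integral_const_mul]
    rw [this]
    refine setIntegral_mono_on ((hint.const_mul _).integrableOn)
      (hh_int.integrableOn) measurableSet_Icc fun x hx => ?_
    have := poly_bound hα k x hx
    have hfx := hnn x
    calc (1 + (k : ℝ) ^ 2) * f x ≤ (C * (1 + x ^ 2)) * f x := by
          apply mul_le_mul_of_nonneg_right _ hfx
          simpa [hC] using this
      _ = h x := by rw [hh]; ring
  -- summability of b
  have hb_summable : Summable b := by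
    refine summable_of_sum_le (c := ∫ x, h x) hb_nn fun u => ?_
    have hIoc : ∀ k : ℤ, b k = ∫ x in Set.Ioc ((k : ℝ) * α) (((k : ℝ) + 1) * α), h x :=
      fun k => integral_Icc_eq_integral_Ioc
    calc ∑ k ∈ u, b k
        = ∑ k ∈ u, ∫ x in Set.Ioc ((k : ℝ) * α) (((k : ℝ) + 1) * α), h x := by
          exact Finset.sum_congr rfl fun k _ => hIoc k
      _ = ∫ x in ⋃ k ∈ u, Set.Ioc ((k : ℝ) * α) (((k : ℝ) + 1) * α), h x := by
          refine (integral_biUnion_finset u (fun i _ => measurableSet_Ioc) ?_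
            (fun i _ => hh_int.integrableOn)).symm
          intro i _ j _ hij
          simp only [Function.onFun]
          rw [Set.Ioc_disjoint_Ioc]
          rcases lt_or_gt_of_ne hij with hlt | hlt
          · have : (i:ℝ) + 1 ≤ (j:ℝ) := by exact_mod_cast hlt
            calc min (((i:ℝ)+1)*α) (((j:ℝ)+1)*α) ≤ ((i:ℝ)+1)*α := min_le_left _ _
              _ ≤ (j:ℝ)*α := by nlinarith
              _ ≤ max ((i:ℝ)*α) ((j:ℝ)*α) := le_max_right _ _
          · have : (j:ℝ) + 1 ≤ (i:ℝ) := by exact_mod_cast hlt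
            calc min (((i:ℝ)+1)*α) (((j:ℝ)+1)*α) ≤ ((j:ℝ)+1)*α := min_le_right _ _
              _ ≤ (i:ℝ)*α := by nlinarith
              _ ≤ max ((i:ℝ)*α) ((j:ℝ)*α) := le_max_left _ _
      _ ≤ ∫ x, h x := setIntegral_le_integral hh_int
          (Filter.Eventually.of_forall fun x => hh_nn x)
  -- summability of (1+k²) ω k
  have hA : Summable fun k : ℤ => (1 + (k : ℝ) ^ 2) * ω k :=
    Summable.of_nonneg_of_le
      (fun k => mul_nonneg (by positivity) (hω_nn k)) hkey hb_summable
  -- final comparison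
  refine Summable.of_nonneg_of_le (fun k => Real.sqrt_nonneg _)
    (fun k => ?_) (hA.add summable_inv_one_add_sq)
  have hk2 : (0:ℝ) < 1 + (k : ℝ) ^ 2 := by positivity
  have : ω k = ((1 + (k : ℝ) ^ 2) * ω k) * (1 / (1 + (k : ℝ) ^ 2)) := by
    field_simp
  have hle := sqrt_amgm ((1 + (k : ℝ) ^ 2) * ω k) (1 / (1 + (k : ℝ) ^ 2))
    (mul_nonneg hk2.le (hω_nn k)) (by positivity)
  rw [← this] at hle
  exact hle
end

section
/- There exists a nonnegative integrable function f : ℝ → ℝ with ∫ f = 1 and ∫ √f < ∞ such that for every α > 0 and every partition of ℝ into consecutive intervals of length α, the series ∑_k √(∫_{I_k} f) diverges. -/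
open MeasureTheory Set

noncomputable def ell (n : ℕ) : ℝ := 1 / (((n:ℝ) + 1) * ((n:ℝ) + 2))

lemma ell_pos (n : ℕ) : 0 < ell n := by
  unfold ell; positivity

lemma ell_le_one (n : ℕ) : ell n ≤ 1 := by
  unfold ell
  rw [div_le_one (by positivity)]
  nlinarith [Nat.cast_nonneg (α := ℝ) n]

lemma hasSum_ell : HasSum ell 1 := by
  have h : ∀ n : ℕ, ell n = 1/((n:ℝ)+1) - 1/((n:ℝ)+2) := by
    intro n
    unfold ell
    field_simp
    ring
  rw [hasSum_iff_tendsto_nat_of_nonneg (fun n => (ell_pos n).le)]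
  have : ∀ N : ℕ, ∑ i ∈ Finset.range N, ell i = 1 - 1/((N:ℝ)+1) := by
    intro N
    have := Finset.sum_range_sub' (fun n : ℕ => 1/((n:ℝ)+1)) N
    simp only [h]
    rw [show (1:ℝ) - 1/((N:ℝ)+1) = 1/(((0:ℕ):ℝ)+1) - 1/((N:ℝ)+1) from by norm_num, ← this]
    apply Finset.sum_congr rfl
    intro n _
    push_cast
    ring
  simp only [this]
  have : Filter.Tendsto (fun N : ℕ => 1/((N:ℝ)+1)) Filter.atTop (nhds 0) :=
    tendsto_one_div_add_atTop_nhds_zero_nat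
  simpa using Filter.Tendsto.const_sub 1 this

noncomputable def myS : Set ℝ := ⋃ n : ℕ, Ico ((n:ℝ) + 1 - ell n) ((n:ℝ) + 1)

lemma myS_meas : MeasurableSet myS := MeasurableSet.iUnion fun _ => measurableSet_Ico

lemma blocks_disjoint : Pairwise (Function.onFun Disjoint
    fun n : ℕ => Ico ((n:ℝ) + 1 - ell n) ((n:ℝ) + 1)) := by
  have key : ∀ n m : ℕ, n < m → Disjoint (Ico ((n:ℝ)+1-ell n) ((n:ℝ)+1))
      (Ico ((m:ℝ)+1-ell m) ((m:ℝ)+1)) := by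
    intro n m h
    rw [Set.Ico_disjoint_Ico]
    have h1 : (n:ℝ) + 1 ≤ (m:ℝ) := by exact_mod_cast h
    calc min ((n:ℝ)+1) ((m:ℝ)+1) ≤ (n:ℝ)+1 := min_le_left _ _
      _ ≤ (m:ℝ)+1 - ell m := by linarith [ell_le_one m]
      _ ≤ _ := le_max_right _ _
  intro n m hnm
  rcases lt_or_gt_of_ne hnm with h | h
  · exact key n m h
  · exact (key m n h).symm

lemma vol_myS : MeasureTheory.volume myS = 1 := by
  rw [myS, MeasureTheory.measure_iUnion blocks_disjoint fun _ => measurableSet_Ico]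
  have h : ∀ n : ℕ, MeasureTheory.volume (Ico ((n:ℝ)+1-ell n) ((n:ℝ)+1))
      = ENNReal.ofReal (ell n) := by
    intro n; rw [Real.volume_Ico]; congr 1; ring
  simp only [h]
  rw [← ENNReal.ofReal_tsum_of_nonneg (fun n => (ell_pos n).le) hasSum_ell.summable,
    hasSum_ell.tsum_eq, ENNReal.ofReal_one]

noncomputable def myf : ℝ → ℝ := myS.indicator fun _ => (1:ℝ)

lemma myf_meas : Measurable myf := measurable_const.indicator myS_meas

lemma myf_nonneg : ∀ x, 0 ≤ myf x := fun x =>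
  Set.indicator_nonneg (fun _ _ => zero_le_one) x

lemma myf_int : MeasureTheory.Integrable myf := by
  rw [myf, MeasureTheory.integrable_indicator_iff myS_meas]
  apply (MeasureTheory.integrableOn_const_iff (C := (1:ℝ))).mpr
  right
  rw [vol_myS]; exact ENNReal.one_lt_top

lemma myf_integral : (∫ x, myf x) = 1 := by
  rw [myf, MeasureTheory.integral_indicator myS_meas, MeasureTheory.setIntegral_const,
    MeasureTheory.measureReal_def, vol_myS]
  norm_num

lemma sqrt_myf : (fun x => Real.sqrt (myf x)) = myf := by
  funext x
  rw [myf]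
  by_cases hx : x ∈ myS
  · simp [Set.indicator_of_mem hx]
  · simp [Set.indicator_of_notMem hx]

/-- arithmetic core of the cell bound -/
lemma minmax (m ℓ L α : ℝ) (hℓ : 0 < ℓ) (hℓα : ℓ ≤ α)
    (h1 : L ≤ m - ℓ/2) (h2 : m - ℓ/2 < L + α) :
    ℓ/2 ≤ min m (L + α) - max (m - ℓ) L := by
  rcases min_cases m (L + α) with ⟨e1, e2⟩ | ⟨e1, e2⟩ <;>
    rcases max_cases (m - ℓ) L with ⟨f1, f2⟩ | ⟨f1, f2⟩ <;> rw [e1, f1] <;> linarith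

/-- lower bound for the integral of `myf` over a cell containing the midpoint of block n -/
lemma cell_bound (n : ℕ) (L α : ℝ) (hα : 0 < α) (hℓα : ell n ≤ α)
    (h1 : L ≤ (n:ℝ) + 1 - ell n / 2) (h2 : (n:ℝ) + 1 - ell n / 2 < L + α) :
    ell n / 2 ≤ ∫ x in Ico L (L + α), myf x := by
  have hint : (∫ x in Ico L (L + α), myf x)
      = (MeasureTheory.volume (myS ∩ Ico L (L + α))).toReal := by
    rw [myf, MeasureTheory.setIntegral_indicator myS_meas, MeasureTheory.setIntegral_const,
      smul_eq_mul, mul_one, Set.inter_comm, MeasureTheory.measureReal_def]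
  rw [hint]
  have hsub : Ico (max ((n:ℝ) + 1 - ell n) L) (min ((n:ℝ)+1) (L + α))
      ⊆ myS ∩ Ico L (L + α) := by
    rw [← Set.Ico_inter_Ico]
    apply Set.inter_subset_inter
    · exact Set.subset_iUnion (fun k : ℕ => Ico ((k:ℝ) + 1 - ell k) ((k:ℝ) + 1)) n
    · exact subset_rfl
  have hvol1 : ENNReal.ofReal (ell n / 2) ≤ MeasureTheory.volume (myS ∩ Ico L (L + α)) := by
    calc ENNReal.ofReal (ell n / 2)
        ≤ ENNReal.ofReal (min ((n:ℝ)+1) (L + α) - max ((n:ℝ) + 1 - ell n) L) :=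
          ENNReal.ofReal_le_ofReal (minmax ((n:ℝ)+1) (ell n) L α (ell_pos n) hℓα h1 h2)
      _ = MeasureTheory.volume (Ico (max ((n:ℝ) + 1 - ell n) L) (min ((n:ℝ)+1) (L + α))) := by
          rw [Real.volume_Ico]
      _ ≤ _ := MeasureTheory.measure_mono hsub
  have hfin : MeasureTheory.volume (myS ∩ Ico L (L + α)) ≠ ⊤ := by
    apply ne_of_lt
    calc MeasureTheory.volume (myS ∩ Ico L (L + α))
        ≤ MeasureTheory.volume (Ico L (L + α)) :=
          MeasureTheory.measure_mono Set.inter_subset_right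
      _ < ⊤ := by rw [Real.volume_Ico]; exact ENNReal.ofReal_lt_top
  calc ell n / 2 = (ENNReal.ofReal (ell n / 2)).toReal := by
        rw [ENNReal.toReal_ofReal (by linarith [ell_pos n])]
    _ ≤ _ := ENNReal.toReal_mono hfin hvol1

/-- There is a probability density `f` with `∫ √f < ∞` such that for every spacing `α > 0`
and every partition of `ℝ` into consecutive intervals of length `α`, the series
`∑ₖ √(∫_{Iₖ} f)` diverges. -/
theorem stmt_4 :
    ∃ f : ℝ → ℝ, Measurable f ∧ (∀ x, 0 ≤ f x) ∧ MeasureTheory.Integrable f ∧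
      (∫ x, f x) = 1 ∧ MeasureTheory.Integrable (fun x => Real.sqrt (f x)) ∧
      ∀ α > (0 : ℝ), ∀ c : ℝ,
        ¬ Summable fun k : ℤ =>
            Real.sqrt (∫ x in Set.Ico (c + (k : ℝ) * α) (c + ((k : ℝ) + 1) * α), f x) := by
  refine ⟨myf, myf_meas, myf_nonneg, myf_int, myf_integral,
    by rw [sqrt_myf]; exact myf_int, ?_⟩
  intro α hα c hsum
  set g : ℤ → ℝ := fun k : ℤ =>
    Real.sqrt (∫ x in Set.Ico (c + (k : ℝ) * α) (c + ((k : ℝ) + 1) * α), myf x) with hg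
  obtain ⟨M, hM⟩ := exists_nat_ge α
  obtain ⟨n₀, hn₀⟩ := exists_nat_ge (1/α)
  have hn0pos : (0:ℝ) < (n₀:ℝ) := lt_of_lt_of_le (by positivity) hn₀
  set b : ℕ → ℕ := fun j => M * (n₀ + j + 1) + n₀ + j with hb
  have hbcast : ∀ j : ℕ, (b j : ℝ) + 1 = ((M:ℝ)+1) * ((n₀:ℝ) + (j:ℝ) + 1) := by
    intro j; simp only [hb]; push_cast; ring
  set p : ℕ → ℝ := fun j => (b j : ℝ) + 1 - ell (b j) / 2 with hp
  set k : ℕ → ℤ := fun j => ⌊(p j - c)/α⌋ with hk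
  -- the cell with index k j contains p j
  have hL : ∀ j : ℕ, c + (k j : ℝ) * α ≤ p j := by
    intro j
    have h1 : (k j : ℝ) ≤ (p j - c)/α := Int.floor_le _
    have := (le_div_iff₀ hα).mp h1
    linarith
  have hR : ∀ j : ℕ, p j < c + (k j : ℝ) * α + α := by
    intro j
    have h1 : (p j - c)/α < (k j : ℝ) + 1 := Int.lt_floor_add_one _
    have := (div_lt_iff₀ hα).mp h1
    linarith
  -- ell (b j) ≤ α
  have hbn : ∀ j : ℕ, (n₀:ℝ) ≤ (b j : ℝ) + 1 := by
    intro j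
    rw [hbcast j]
    nlinarith [Nat.cast_nonneg (α := ℝ) M, Nat.cast_nonneg (α := ℝ) j, hn0pos]
  have hℓα : ∀ j : ℕ, ell (b j) ≤ α := by
    intro j
    have h2 : ell (b j) ≤ 1/(n₀:ℝ) := by
      unfold ell
      apply one_div_le_one_div_of_le hn0pos
      nlinarith [hbn j, Nat.cast_nonneg (α := ℝ) (b j)]
    have h3 : 1/(n₀:ℝ) ≤ α := (one_div_le hn0pos hα).mpr hn₀
    linarith
  -- key lower bound for g (k j)
  have hlow : ∀ j : ℕ, 1/(2*((b j:ℝ)+2)) ≤ g (k j) := by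
    intro j
    have hcell : ell (b j) / 2 ≤
        ∫ x in Set.Ico (c + (k j : ℝ) * α) (c + ((k j : ℝ) + 1) * α), myf x := by
      have heq : Set.Ico (c + (k j : ℝ) * α) (c + ((k j : ℝ) + 1) * α)
          = Set.Ico (c + (k j : ℝ) * α) ((c + (k j : ℝ) * α) + α) := by
        congr 1; ring
      rw [heq]
      exact cell_bound (b j) (c + (k j : ℝ) * α) α hα (hℓα j) (hL j) (hR j)
    have hx2 : (1/(2*((b j:ℝ)+2)))^2 ≤ ell (b j) / 2 := by
      unfold ell
      rw [div_pow, one_pow, div_div, div_le_div_iff₀ (by positivity) (by positivity)]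
      nlinarith [Nat.cast_nonneg (α := ℝ) (b j)]
    rw [hg]
    rw [Real.le_sqrt (by positivity : (0:ℝ) ≤ 1/(2*((b j:ℝ)+2)))]
    all_goals linarith [ell_pos (b j)]
  -- k is strictly monotone, hence injective
  have hmono : StrictMono k := by
    apply strictMono_nat_of_lt_succ
    intro j
    have hℓ1 : ell (b j) ≤ 1 := ell_le_one _
    have hℓ2 : 0 < ell (b (j+1)) := ell_pos _
    have hℓ3 : ell (b (j+1)) ≤ 1 := ell_le_one _
    have hℓ4 : 0 < ell (b j) := ell_pos _
    have hdiff : p j + α ≤ p (j+1) := by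
      have e1 := hbcast j
      have e2 := hbcast (j+1)
      rw [hp]
      simp only
      push_cast at e2 ⊢
      nlinarith [hM]
    have hxy : (p j - c)/α + 1 ≤ (p (j+1) - c)/α := by
      rw [div_add' _ _ _ (ne_of_gt hα)]
      gcongr
      linarith
    have : k j + 1 ≤ k (j+1) := by
      rw [hk]
      calc ⌊(p j - c)/α⌋ + 1 = ⌊(p j - c)/α + 1⌋ := (Int.floor_add_one _).symm
        _ ≤ ⌊(p (j+1) - c)/α⌋ := Int.floor_le_floor hxy
    omega
  have hcomp : Summable (g ∘ k) := hsum.comp_injective hmono.injective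
  -- comparison with the harmonic series
  set D : ℝ := 2*(((M:ℝ)+1)*((n₀:ℝ)+1)+1) with hD
  have hDpos : 0 < D := by positivity
  have hharm : Summable (fun j : ℕ => (1/D) * (1/((j:ℝ)+1))) := by
    apply Summable.of_nonneg_of_le (fun j => by positivity) ?_ hcomp
    intro j
    have h1 : 2*((b j:ℝ)+2) ≤ D * ((j:ℝ)+1) := by
      have := hbcast j
      rw [hD]
      nlinarith [Nat.cast_nonneg (α := ℝ) M, Nat.cast_nonneg (α := ℝ) j,
        Nat.cast_nonneg (α := ℝ) n₀,
        mul_nonneg (mul_nonneg (by positivity : (0:ℝ) ≤ (M:ℝ)+1)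
          (Nat.cast_nonneg (α := ℝ) n₀)) (Nat.cast_nonneg (α := ℝ) j)]
    have h2 : (1/D) * (1/((j:ℝ)+1)) ≤ 1/(2*((b j:ℝ)+2)) := by
      have he : (1/D) * (1/((j:ℝ)+1)) = 1/(D*((j:ℝ)+1)) := by
        rw [div_mul_div_comm, one_mul]
      rw [he]
      exact one_div_le_one_div_of_le (by positivity) h1
    exact h2.trans (hlow j)
  have hsum3 : Summable (fun j : ℕ => 1/((j:ℝ)+1)) :=
    (summable_mul_left_iff (ne_of_gt (by positivity : (0:ℝ) < 1/D))).mp hharm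
  have : Summable (fun n : ℕ => 1/(n:ℝ)) := by
    rw [← summable_nat_add_iff 1]
    simpa using hsum3
  exact Real.not_summable_one_div_natCast this
end

section
/- Let g_Q and g_P be centered Gaussian densities on ℝ with variances σ_Q² and σ_P² satisfying σ_Q·σ_P = 1/2. Then h_min(g_Q) + h_max(g_P) = log(2π), where h_min(f) = −log ‖f‖_∞ and h_max(f) = 2·log ∫ √f. -/
open MeasureTheory Real in
lemma gauss_eLpNorm_top (σ : ℝ) (hσ : 0 < σ) :
    (eLpNorm (fun x : ℝ => (Real.sqrt (2 * Real.pi * σ ^ 2))⁻¹ *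
      Real.exp (-x ^ 2 / (2 * σ ^ 2))) ⊤ (volume : Measure ℝ)).toReal
      = (Real.sqrt (2 * Real.pi * σ ^ 2))⁻¹ := by
  have hapos : (0:ℝ) < 2 * Real.pi * σ ^ 2 := by positivity
  set C : ℝ := (Real.sqrt (2 * Real.pi * σ ^ 2))⁻¹ with hC
  have hCpos : 0 < C := by
    rw [hC]; exact inv_pos.mpr (Real.sqrt_pos.mpr hapos)
  set g : ℝ → ℝ := fun x => C * Real.exp (-x ^ 2 / (2 * σ ^ 2)) with hg
  have hgpos : ∀ x, 0 < g x := fun x => mul_pos hCpos (Real.exp_pos _)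
  have hgle : ∀ x, g x ≤ C := by
    intro x
    have hexp : Real.exp (-x ^ 2 / (2 * σ ^ 2)) ≤ 1 := by
      rw [Real.exp_le_one_iff]
      have : (0:ℝ) < 2 * σ ^ 2 := by positivity
      apply div_nonpos_of_nonpos_of_nonneg (by nlinarith [sq_nonneg x]) this.le
    calc g x = C * Real.exp (-x ^ 2 / (2 * σ ^ 2)) := rfl
      _ ≤ C * 1 := by exact mul_le_mul_of_nonneg_left hexp hCpos.le
      _ = C := mul_one C
  have hg0 : g 0 = C := by simp [hg]
  have hcont : Continuous g := by
    apply Continuous.mul continuous_const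
    exact Real.continuous_exp.comp (by continuity)
  rw [eLpNorm_exponent_top]
  have hub : eLpNormEssSup g volume ≤ ENNReal.ofReal C := by
    apply eLpNormEssSup_le_of_ae_bound
    filter_upwards with x
    rw [Real.norm_of_nonneg (hgpos x).le]
    exact hgle x
  have hlb : ENNReal.ofReal C ≤ eLpNormEssSup g volume := by
    by_contra h
    push_neg at h
    have hM : eLpNormEssSup g volume ≠ ⊤ := (h.trans_le le_top).ne
    have hMC : (eLpNormEssSup g volume).toReal < C :=
      (ENNReal.lt_ofReal_iff_toReal_lt hM).mp h
    set U : Set ℝ := {x | (eLpNormEssSup g volume).toReal < g x} with hU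
    have hUopen : IsOpen U := isOpen_lt continuous_const hcont
    have hU0 : (0:ℝ) ∈ U := by rw [hU]; simpa [hg0] using hMC
    have hUpos : 0 < volume U := hUopen.measure_pos volume ⟨0, hU0⟩
    have hae : ∀ᵐ x : ℝ, x ∉ U := by
      filter_upwards [ae_le_eLpNormEssSup (f := g) (μ := volume)] with x hx hxU
      have h1 : g x ≤ (eLpNormEssSup g volume).toReal := by
        have := ENNReal.toReal_mono hM hx
        simpa [Real.norm_of_nonneg (hgpos x).le] using this
      exact absurd hxU (not_lt.mpr h1)
    have h0 : volume U = 0 := by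
      have := hae
      rw [MeasureTheory.ae_iff] at this
      simpa using this
    exact absurd h0 hUpos.ne'
  have : eLpNormEssSup g volume = ENNReal.ofReal C := le_antisymm hub hlb
  rw [this, ENNReal.toReal_ofReal hCpos.le]

open MeasureTheory Real in
lemma gauss_sqrt_integral (σ : ℝ) (hσ : 0 < σ) :
    (∫ x : ℝ, Real.sqrt ((Real.sqrt (2 * Real.pi * σ ^ 2))⁻¹ *
      Real.exp (-x ^ 2 / (2 * σ ^ 2))))
      = (Real.sqrt (Real.sqrt (2 * Real.pi * σ ^ 2)))⁻¹ *
        Real.sqrt (Real.pi * (4 * σ ^ 2)) := by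
  have hapos : (0:ℝ) < 2 * Real.pi * σ ^ 2 := by positivity
  have h1 : ∀ x : ℝ, Real.sqrt ((Real.sqrt (2 * Real.pi * σ ^ 2))⁻¹ *
      Real.exp (-x ^ 2 / (2 * σ ^ 2)))
      = (Real.sqrt (Real.sqrt (2 * Real.pi * σ ^ 2)))⁻¹ *
        Real.exp (-(1 / (4 * σ ^ 2)) * x ^ 2) := by
    intro x
    rw [Real.sqrt_mul (by positivity), Real.sqrt_inv, ← Real.exp_half]
    congr 1
    rw [div_div]
    congr 1
    have hs : (σ:ℝ) ^ 2 ≠ 0 := by positivity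
    field_simp
    ring_nf
  simp_rw [h1]
  rw [integral_const_mul, integral_gaussian]
  congr 2
  field_simp

open MeasureTheory in
/-- Minimal-uncertainty Gaussians saturate the min/max entropic uncertainty relation:
if `σ_Q σ_P = 1/2` then `h_min(g_Q) + h_max(g_P) = log(2π)`. -/
theorem stmt_7 (σQ σP : ℝ) (hσQ : 0 < σQ) (hσP : 0 < σP) (hmin : σQ * σP = 1 / 2)
    (gQ gP : ℝ → ℝ)
    (hgQ : gQ = fun x => (Real.sqrt (2 * Real.pi * σQ ^ 2))⁻¹ *
        Real.exp (-x ^ 2 / (2 * σQ ^ 2)))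
    (hgP : gP = fun x => (Real.sqrt (2 * Real.pi * σP ^ 2))⁻¹ *
        Real.exp (-x ^ 2 / (2 * σP ^ 2))) :
    (-Real.log ((eLpNorm gQ ⊤ (volume : Measure ℝ)).toReal)) +
        2 * Real.log (∫ x, Real.sqrt (gP x)) = Real.log (2 * Real.pi) := by
  subst hgQ hgP
  rw [gauss_eLpNorm_top σQ hσQ, gauss_sqrt_integral σP hσP]
  have hpi : (0:ℝ) < Real.pi := Real.pi_pos
  have haQ : (0:ℝ) < 2 * Real.pi * σQ ^ 2 := by positivity
  have haP : (0:ℝ) < 2 * Real.pi * σP ^ 2 := by positivity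
  have hbP : (0:ℝ) < Real.pi * (4 * σP ^ 2) := by positivity
  have e1 : Real.log ((Real.sqrt (2 * Real.pi * σQ ^ 2))⁻¹)
      = -(Real.log (2 * Real.pi * σQ ^ 2) / 2) := by
    rw [Real.log_inv, Real.log_sqrt haQ.le]
  have e2 : Real.log ((Real.sqrt (Real.sqrt (2 * Real.pi * σP ^ 2)))⁻¹ *
        Real.sqrt (Real.pi * (4 * σP ^ 2)))
      = -(Real.log (2 * Real.pi * σP ^ 2) / 2 / 2)
        + Real.log (Real.pi * (4 * σP ^ 2)) / 2 := by
    rw [Real.log_mul (by positivity) (by positivity), Real.log_inv,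
      Real.log_sqrt (Real.sqrt_nonneg _), Real.log_sqrt haP.le, Real.log_sqrt hbP.le]
  rw [e1, e2]
  have hsq : σQ ^ 2 * σP ^ 2 = 1 / 4 := by nlinarith [hmin]
  have hprod : (2 * Real.pi * σQ ^ 2) * (2 * Real.pi * σP ^ 2) = Real.pi ^ 2 := by
    linear_combination 4 * Real.pi ^ 2 * hsq
  have hsum : Real.log (2 * Real.pi * σQ ^ 2) + Real.log (2 * Real.pi * σP ^ 2)
      = 2 * Real.log Real.pi := by
    rw [← Real.log_mul haQ.ne' haP.ne', hprod, Real.log_pow]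
    norm_num
  have hb : Real.log (Real.pi * (4 * σP ^ 2))
      = Real.log (2 * Real.pi * σP ^ 2) + Real.log 2 := by
    rw [← Real.log_mul haP.ne' (by norm_num : (2:ℝ) ≠ 0)]
    congr 1; ring
  have h2pi : Real.log (2 * Real.pi) = Real.log 2 + Real.log Real.pi :=
    Real.log_mul (by norm_num) hpi.ne'
  linarith
end

section
/- For all ν > 1, f(ν) = log(e·π·ν) − ((ν+1)/2)·log((ν+1)/2) + ((ν−1)/2)·log((ν−1)/2) satisfies f(ν) > log(2π). -/
lemma log_lt_half {x : ℝ} (hx : 1 < x) : Real.log x < (x - x⁻¹) / 2 := by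
  have key : StrictMonoOn (fun x : ℝ => (x - x⁻¹) / 2 - Real.log x) (Set.Ici 1) := by
    apply strictMonoOn_of_deriv_pos (convex_Ici 1)
    · apply ContinuousOn.sub
      · exact ((continuousOn_id.sub (continuousOn_inv₀.mono (by
          intro y hy
          simp only [Set.mem_Ici, Set.mem_compl_iff, Set.mem_singleton_iff] at *
          linarith))).div_const 2)
      · exact Real.continuousOn_log.mono (by
          intro y hy
          simp only [Set.mem_Ici, Set.mem_compl_iff, Set.mem_singleton_iff] at *
          linarith)
    · intro y hy
      rw [interior_Ici] at hy
      have hy1 : (1:ℝ) < y := hy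
      have hy0 : y ≠ 0 := by linarith
      have hd : HasDerivAt (fun x : ℝ => (x - x⁻¹) / 2 - Real.log x)
          ((1 - -(y^2)⁻¹) / 2 - y⁻¹) y :=
        (((hasDerivAt_id y).sub (hasDerivAt_inv hy0)).div_const 2).sub
          (Real.hasDerivAt_log hy0)
      rw [hd.deriv]
      have heq : (1 - -(y^2)⁻¹) / 2 - y⁻¹ = (y-1)^2 / (2*y^2) := by
        field_simp; ring
      rw [heq]
      have h3 : (0:ℝ) < (y-1)^2 := pow_pos (by linarith) 2
      positivity
  have h := key (Set.self_mem_Ici) (Set.mem_Ici.mpr hx.le) hx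
  simp only [Real.log_one, inv_one] at h
  norm_num at h
  linarith

lemma lemA {x y : ℝ} (hy : 0 < y) (hxy : y < x) :
    x * (Real.log x - Real.log y) < (x^2 - y^2) / (2*y) := by
  have hx : 0 < x := hy.trans hxy
  have h1 : (1:ℝ) < x / y := (one_lt_div hy).mpr hxy
  have h := log_lt_half h1
  rw [Real.log_div hx.ne' hy.ne'] at h
  have hx0 := hx.ne'
  have hy0 := hy.ne'
  have h2 : x * (Real.log x - Real.log y) < x * ((x/y - (x/y)⁻¹)/2) := by
    exact (mul_lt_mul_iff_right₀ hx).mpr h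
  have heq : x * ((x/y - (x/y)⁻¹)/2) = (x^2 - y^2) / (2*y) := by
    rw [inv_div]; field_simp
  linarith [h2, heq ▸ h2]

lemma lemB {x y : ℝ} (hy : 0 < y) (hxy : y < x) :
    y * (Real.log x - Real.log y) < (x^2 - y^2) / (2*x) := by
  have hx : 0 < x := hy.trans hxy
  have h1 : (1:ℝ) < x / y := (one_lt_div hy).mpr hxy
  have h := log_lt_half h1
  rw [Real.log_div hx.ne' hy.ne'] at h
  have h2 : y * (Real.log x - Real.log y) < y * ((x/y - (x/y)⁻¹)/2) :=
    (mul_lt_mul_iff_right₀ hy).mpr h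
  have heq : y * ((x/y - (x/y)⁻¹)/2) = (x^2 - y^2) / (2*x) := by
    rw [inv_div]; field_simp
  linarith [heq ▸ h2]

/-- For every `ν > 1`,
`log(eπν) − ((ν+1)/2)log((ν+1)/2) + ((ν−1)/2)log((ν−1)/2) > log(2π)`. -/
theorem stmt_9 (ν : ℝ) (hν : 1 < ν) :
    Real.log (Real.exp 1 * Real.pi * ν)
        - ((ν + 1) / 2) * Real.log ((ν + 1) / 2)
        + ((ν - 1) / 2) * Real.log ((ν - 1) / 2) > Real.log (2 * Real.pi) := by
  have hν0 : 0 < ν := by linarith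
  have hπ := Real.pi_pos
  have ha : 0 < (ν + 1)/2 := by linarith
  have hb : 0 < (ν - 1)/2 := by linarith
  have hm : 0 < ν/2 := by linarith
  have hA := lemA hm (show ν/2 < (ν+1)/2 by linarith)
  have hB := lemB hb (show (ν-1)/2 < ν/2 by linarith)
  have hAe : (((ν+1)/2)^2 - (ν/2)^2) / (2*(ν/2)) = (((ν+1)/2)^2 - (ν/2)^2)/ν := by
    ring_nf
  have hBe : ((ν/2)^2 - ((ν-1)/2)^2) / (2*(ν/2)) = ((ν/2)^2 - ((ν-1)/2)^2)/ν := by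
    ring_nf
  rw [hAe] at hA
  rw [hBe] at hB
  have hsum : (((ν+1)/2)^2 - (ν/2)^2)/ν + ((ν/2)^2 - ((ν-1)/2)^2)/ν = 1 := by
    field_simp; ring
  have hlogm : Real.log (ν/2) = Real.log ν - Real.log 2 := Real.log_div hν0.ne' (by norm_num)
  rw [Real.log_mul (by positivity) hν0.ne', Real.log_mul (Real.exp_pos 1).ne' hπ.ne',
    Real.log_exp, Real.log_mul (by norm_num) hπ.ne']
  have key : ((ν+1)/2) * Real.log ((ν+1)/2) - ((ν-1)/2) * Real.log ((ν-1)/2)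
      - Real.log (ν/2) < 1 := by linarith
  rw [hlogm] at key
  linarith
end
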